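/- Let P be a finite p-group, and suppose Δ(P) is the diagonal subgroup of P × P. Then Δ(P) is expansive in P × P if and only if for every x ∈ P, the condition that the set of commutators {[y,x] : y ∈ P} meets Z(P) only in the identity implies x ∈ Z(P). -/

import Mathlib

/-- `H ^ g = g⁻¹ H g`, the conjugate of `H` by `g`. -/
def conjSub {G : Type*} [Group G] (H : Subgroup G) (g : G) : Subgroup G :=
  Subgroup.map (MulAut.conj g⁻¹).toMonoidHom H

/-- `Z_G(Q)`: the subgroup of `N_G(Q)` containing `Q` with
`Z_G(Q)/Q = Z(N_G(Q)/Q)`. -/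
def Zsub {G : Type*} [Group G] (Q : Subgroup G) : Subgroup G :=
  Subgroup.map (Subgroup.normalizer (Q : Set G)).subtype
    (Subgroup.comap (QuotientGroup.mk' (Q.subgroupOf (Subgroup.normalizer (Q : Set G))))
      (Subgroup.center ((Subgroup.normalizer (Q : Set G)) ⧸ Q.subgroupOf (Subgroup.normalizer (Q : Set G)))))

/-- `Q` is expansive in the finite `p`-group `G`:
for all `g`, `Q^g ∩ Z_G(Q) ≤ Q` implies `Q^g = Q`. -/
def IsExpansiveP {G : Type*} [Group G] (Q : Subgroup G) : Prop :=
  ∀ g : G, conjSub Q g ⊓ Zsub Q ≤ Q → conjSub Q g = Q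

/-- The diagonal subgroup of `P × P`. -/
def diagSubgroup (P : Type*) [Group P] : Subgroup (P × P) :=
  ((MonoidHom.id P).prod (MonoidHom.id P)).range

lemma mem_diag {P : Type*} [Group P] {x : P × P} :
    x ∈ diagSubgroup P ↔ x.1 = x.2 := by
  constructor
  · rintro ⟨y, hy⟩
    simp only [MonoidHom.prod_apply, MonoidHom.id_apply] at hy
    rw [← hy]
  · intro h
    exact ⟨x.1, by simp [Prod.ext_iff, h]⟩

lemma mem_normalizer_diag {P : Type*} [Group P] {g : P × P} :
    g ∈ Subgroup.normalizer ((diagSubgroup P : Subgroup (P × P)) : Set (P × P)) ↔ g.1⁻¹ * g.2 ∈ Subgroup.center P := by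
  rw [Subgroup.mem_normalizer_iff, Subgroup.mem_center_iff]
  constructor
  · intro h x
    have h1 := (h (x, x)).mp (mem_diag.mpr rfl)
    rw [mem_diag] at h1
    simp only [Prod.fst_mul, Prod.snd_mul, Prod.fst_inv, Prod.snd_inv] at h1
    calc x * (g.1⁻¹ * g.2) = g.1⁻¹ * (g.1 * x * g.1⁻¹) * g.2 := by group
      _ = g.1⁻¹ * (g.2 * x * g.2⁻¹) * g.2 := by rw [h1]
      _ = g.1⁻¹ * g.2 * x := by group
  · intro h n
    have key : ∀ u : P, g.2 * u * g.2⁻¹ = g.1 * u * g.1⁻¹ := by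
      intro u
      calc g.2 * u * g.2⁻¹
          = g.1 * ((g.1⁻¹ * g.2) * u * (g.1⁻¹ * g.2)⁻¹) * g.1⁻¹ := by group
        _ = g.1 * ((u * (g.1⁻¹ * g.2)) * (g.1⁻¹ * g.2)⁻¹) * g.1⁻¹ := by rw [← h u]
        _ = g.1 * u * g.1⁻¹ := by group
    rw [mem_diag, mem_diag]
    simp only [Prod.fst_mul, Prod.snd_mul, Prod.fst_inv, Prod.snd_inv]
    rw [key n.2]
    constructor
    · intro hx; rw [hx]
    · intro hx
      exact mul_left_cancel (mul_right_cancel hx)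

lemma comm_central_aux {P : Type*} [Group P] (a m z w : P)
    (hz : ∀ x : P, x * z = z * x) (hw : ∀ x : P, x * w = w * x) :
    (a * z)⁻¹ * (m * w)⁻¹ * (a * z) * (m * w) = a⁻¹ * m⁻¹ * a * m := by
  have h1 : ∀ x : P, (a * z)⁻¹ * x * (a * z) = a⁻¹ * x * a := by
    intro x
    calc (a * z)⁻¹ * x * (a * z) = z⁻¹ * ((a⁻¹ * x * a) * z) := by group
      _ = z⁻¹ * (z * (a⁻¹ * x * a)) := by rw [hz]
      _ = a⁻¹ * x * a := by group
  have h3 : ∀ x : P, x * w⁻¹ = w⁻¹ * x := by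
    intro x
    calc x * w⁻¹ = w⁻¹ * ((w * x) * w⁻¹) := by group
      _ = w⁻¹ * ((x * w) * w⁻¹) := by rw [← hw x]
      _ = w⁻¹ * x := by group
  calc (a * z)⁻¹ * (m * w)⁻¹ * (a * z) * (m * w)
      = ((a * z)⁻¹ * ((m * w)⁻¹) * (a * z)) * (m * w) := by group
    _ = (a⁻¹ * (m * w)⁻¹ * a) * (m * w) := by rw [h1]
    _ = (a⁻¹ * w⁻¹) * (m⁻¹ * a * (m * w)) := by group
    _ = (w⁻¹ * a⁻¹) * (m⁻¹ * a * (m * w)) := by rw [h3 a⁻¹]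
    _ = w⁻¹ * ((a⁻¹ * m⁻¹ * a * m) * w) := by group
    _ = w⁻¹ * (w * (a⁻¹ * m⁻¹ * a * m)) := by rw [hw]
    _ = a⁻¹ * m⁻¹ * a * m := by group

lemma mem_Zsub_diag {P : Type*} [Group P] {g : P × P} :
    g ∈ Zsub (diagSubgroup P) ↔ g.1⁻¹ * g.2 ∈ Subgroup.center P := by
  constructor
  · rintro ⟨n, _, rfl⟩
    exact mem_normalizer_diag.mp n.2
  · intro hz
    have hN : g ∈ Subgroup.normalizer ((diagSubgroup P : Subgroup (P × P)) : Set (P × P)) := mem_normalizer_diag.mpr hz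
    refine Subgroup.mem_map.mpr ⟨⟨g, hN⟩, ?_, rfl⟩
    rw [Subgroup.mem_comap, Subgroup.mem_center_iff]
    intro q
    induction q using QuotientGroup.induction_on with
    | H m =>
      simp only [QuotientGroup.mk'_apply]
      rw [← QuotientGroup.mk_mul, ← QuotientGroup.mk_mul, QuotientGroup.eq,
        Subgroup.mem_subgroupOf, mem_diag]
      simp only [Subgroup.coe_mul, Subgroup.coe_inv, Prod.fst_mul, Prod.snd_mul,
        Prod.fst_inv, Prod.snd_inv]
      have hw := mem_normalizer_diag.mp m.2
      have hz' := Subgroup.mem_center_iff.mp hz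
      have hw' := Subgroup.mem_center_iff.mp hw
      have key := comm_central_aux g.1 (↑m : P × P).1 (g.1⁻¹ * g.2)
        ((↑m : P × P).1⁻¹ * (↑m : P × P).2) hz' hw'
      rw [show g.1 * (g.1⁻¹ * g.2) = g.2 by group,
        show (↑m : P × P).1 * ((↑m : P × P).1⁻¹ * (↑m : P × P).2) = (↑m : P × P).2 by group]
        at key
      -- key : g.2⁻¹ * m₂⁻¹ * g.2 * m₂ = g.1⁻¹ * m₁⁻¹ * g.1 * m₁
      calc ((↑m : P × P).1 * g.1)⁻¹ * (g.1 * (↑m : P × P).1)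
          = g.1⁻¹ * (↑m : P × P).1⁻¹ * g.1 * (↑m : P × P).1 := by group
        _ = g.2⁻¹ * (↑m : P × P).2⁻¹ * g.2 * (↑m : P × P).2 := key.symm
        _ = ((↑m : P × P).2 * g.2)⁻¹ * (g.2 * (↑m : P × P).2) := by group

lemma mem_conjSub_diag {P : Type*} [Group P] {g x : P × P} :
    x ∈ conjSub (diagSubgroup P) g ↔ x.2 = (g.1⁻¹ * g.2)⁻¹ * x.1 * (g.1⁻¹ * g.2) := by
  constructor
  · rintro ⟨y, hy, h⟩
    have hy' := mem_diag.mp hy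
    simp only [MulEquiv.coe_toMonoidHom, MulAut.conj_apply] at h
    rw [← h]
    simp only [Prod.fst_mul, Prod.snd_mul, Prod.fst_inv, Prod.snd_inv, inv_inv, ← hy']
    group
  · intro h
    refine ⟨(g.1 * x.1 * g.1⁻¹, g.1 * x.1 * g.1⁻¹), mem_diag.mpr rfl, ?_⟩
    simp only [MulEquiv.coe_toMonoidHom, MulAut.conj_apply]
    ext
    · simp only [Prod.fst_mul, Prod.snd_mul, Prod.fst_inv, Prod.snd_inv, inv_inv]
      group
    · simp only [Prod.fst_mul, Prod.snd_mul, Prod.fst_inv, Prod.snd_inv, inv_inv]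
      rw [h]
      group

/-- `Δ(P)` is expansive in `P × P` if and only if for every `x ∈ P`,
`[P,x] ∩ Z(P) = {1}` implies `x ∈ Z(P)`, where `[P,x]` is the set of
commutators `[y,x] = y⁻¹x⁻¹yx` for `y ∈ P`. -/
theorem diag_expansive_iff {p : ℕ} [Fact p.Prime]
    (P : Type*) [Group P] [Finite P] (hP : IsPGroup p P) :
    IsExpansiveP (diagSubgroup P) ↔
      ∀ x : P,
        (∀ y : P, y⁻¹ * x⁻¹ * y * x ∈ Subgroup.center P → y⁻¹ * x⁻¹ * y * x = 1) →
        x ∈ Subgroup.center P := by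
  constructor
  · intro hE x hx
    have h1 : conjSub (diagSubgroup P) (1, x) ⊓ Zsub (diagSubgroup P) ≤ diagSubgroup P := by
      intro a ha
      obtain ⟨ha1, ha2⟩ := Subgroup.mem_inf.mp ha
      rw [mem_conjSub_diag] at ha1
      have hz := mem_Zsub_diag.mp ha2
      have heq : a.1⁻¹ * a.2 = a.1⁻¹ * x⁻¹ * a.1 * x := by
        rw [ha1]
        show a.1⁻¹ * (((1:P)⁻¹ * x)⁻¹ * a.1 * ((1:P)⁻¹ * x)) = _
        group
      rw [heq] at hz
      have h2 := hx a.1 hz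
      rw [mem_diag, ha1]
      show a.1 = ((1:P)⁻¹ * x)⁻¹ * a.1 * ((1:P)⁻¹ * x)
      calc a.1 = a.1 * (a.1⁻¹ * x⁻¹ * a.1 * x) := by rw [h2]; group
        _ = ((1:P)⁻¹ * x)⁻¹ * a.1 * ((1:P)⁻¹ * x) := by group
    have hconj := hE (1, x) h1
    rw [Subgroup.mem_center_iff]
    intro y
    have hy : (y, x⁻¹ * y * x) ∈ conjSub (diagSubgroup P) (1, x) :=
      mem_conjSub_diag.mpr
        (by show x⁻¹ * y * x = ((1:P)⁻¹ * x)⁻¹ * y * ((1:P)⁻¹ * x); group)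
    rw [hconj, mem_diag] at hy
    have hy' : y = x⁻¹ * y * x := hy
    calc y * x = x * (x⁻¹ * y * x) := by group
      _ = x * y := by rw [← hy']
  · intro hC g hg
    have hc : g.1⁻¹ * g.2 ∈ Subgroup.center P := by
      apply hC
      intro y hy
      have hmem : (y, (g.1⁻¹ * g.2)⁻¹ * y * (g.1⁻¹ * g.2)) ∈
          conjSub (diagSubgroup P) g ⊓ Zsub (diagSubgroup P) := by
        refine Subgroup.mem_inf.mpr ⟨mem_conjSub_diag.mpr rfl, ?_⟩
        rw [mem_Zsub_diag]
        show y⁻¹ * ((g.1⁻¹ * g.2)⁻¹ * y * (g.1⁻¹ * g.2)) ∈ _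
        have h' : y⁻¹ * ((g.1⁻¹ * g.2)⁻¹ * y * (g.1⁻¹ * g.2))
            = y⁻¹ * (g.1⁻¹ * g.2)⁻¹ * y * (g.1⁻¹ * g.2) := by group
        rw [h']
        exact hy
      have hd := hg hmem
      rw [mem_diag] at hd
      have hd' : y = (g.1⁻¹ * g.2)⁻¹ * y * (g.1⁻¹ * g.2) := hd
      calc y⁻¹ * (g.1⁻¹ * g.2)⁻¹ * y * (g.1⁻¹ * g.2)
          = y⁻¹ * ((g.1⁻¹ * g.2)⁻¹ * y * (g.1⁻¹ * g.2)) := by group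
        _ = y⁻¹ * y := by rw [← hd']
        _ = 1 := by group
    have hc' := Subgroup.mem_center_iff.mp hc
    ext a
    rw [mem_conjSub_diag, mem_diag]
    have hfix : (g.1⁻¹ * g.2)⁻¹ * a.1 * (g.1⁻¹ * g.2) = a.1 := by
      calc (g.1⁻¹ * g.2)⁻¹ * a.1 * (g.1⁻¹ * g.2)
          = (g.1⁻¹ * g.2)⁻¹ * (a.1 * (g.1⁻¹ * g.2)) := by group
        _ = (g.1⁻¹ * g.2)⁻¹ * ((g.1⁻¹ * g.2) * a.1) := by rw [hc' a.1]
        _ = a.1 := by group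
    rw [hfix]
    exact eq_comm
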